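/- Let r, i and a be integers with i ≥ 1 and 2 ≤ r ≤ a ≤ 2r. Then the maximum of C(r_1−1+i, i) + C(r_2−1+i, i) over all pairs of integers (r_1, r_2) with 1 ≤ r_1, r_2 ≤ r and r_1 + r_2 = a is equal to C(r−2+i, i) + 1 if a = r, and is equal to C(r−1+i, i) + C(a−r−1+i, i) if r < a ≤ 2r. -/
import Mathlib

private lemma choose_step (m j k : ℕ) (h : j ≤ k) :
    (j + 1 + (m + 1)).choose (m + 1) + (k + (m + 1)).choose (m + 1) ≤
      (j + (m + 1)).choose (m + 1) + (k + 1 + (m + 1)).choose (m + 1) := by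
  have p1 : (j + m + 1 + 1).choose (m + 1) = (j + m + 1).choose m + (j + m + 1).choose (m + 1) :=
    Nat.choose_succ_succ (j + m + 1) m
  have p2 : (k + m + 1 + 1).choose (m + 1) = (k + m + 1).choose m + (k + m + 1).choose (m + 1) :=
    Nat.choose_succ_succ (k + m + 1) m
  have h1 : (j + m + 1).choose m ≤ (k + m + 1).choose m :=
    Nat.choose_le_choose m (by omega)
  have e1 : j + 1 + (m + 1) = j + m + 1 + 1 := by omega
  have e2 : k + 1 + (m + 1) = k + m + 1 + 1 := by omega
  have e3 : j + (m + 1) = j + m + 1 := by omega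
  have e4 : k + (m + 1) = k + m + 1 := by omega
  rw [e1, e2, e3, e4, p1, p2]
  omega

private lemma choose_chain (m j d : ℕ) : ∀ k, j + d ≤ k + 1 →
    (j + d + (m + 1)).choose (m + 1) + (k + (m + 1)).choose (m + 1) ≤
      (j + (m + 1)).choose (m + 1) + (k + d + (m + 1)).choose (m + 1) := by
  induction d with
  | zero => intro k _; simp
  | succ d ih =>
    intro k h
    have h1 : (j + (d + 1) + (m + 1)).choose (m + 1) + (k + (m + 1)).choose (m + 1) ≤
        (j + d + (m + 1)).choose (m + 1) + (k + 1 + (m + 1)).choose (m + 1) := by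
      have := choose_step m (j + d) k (by omega)
      have e : j + (d + 1) = j + d + 1 := by omega
      rw [e]; exact this
    have h2 := ih (k + 1) (by omega)
    have e : k + 1 + d = k + (d + 1) := by omega
    rw [e] at h2
    omega

theorem stmt5 (r i a : ℕ) (hi : 1 ≤ i) (hr : 2 ≤ r) (hra : r ≤ a) (ha : a ≤ 2 * r) :
    (a = r → IsGreatest
      {s : ℕ | ∃ r1 r2 : ℕ, 1 ≤ r1 ∧ r1 ≤ r ∧ 1 ≤ r2 ∧ r2 ≤ r ∧ r1 + r2 = a ∧
        s = (r1 - 1 + i).choose i + (r2 - 1 + i).choose i}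
      ((r - 2 + i).choose i + 1)) ∧
    (r < a → IsGreatest
      {s : ℕ | ∃ r1 r2 : ℕ, 1 ≤ r1 ∧ r1 ≤ r ∧ 1 ≤ r2 ∧ r2 ≤ r ∧ r1 + r2 = a ∧
        s = (r1 - 1 + i).choose i + (r2 - 1 + i).choose i}
      ((r - 1 + i).choose i + (a - r - 1 + i).choose i)) := by
  obtain ⟨m, rfl⟩ : ∃ m, i = m + 1 := ⟨i - 1, by omega⟩
  constructor
  · intro hae
    constructor
    · refine ⟨r - 1, 1, by omega, by omega, le_refl 1, by omega, by omega, ?_⟩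
      have e1 : r - 1 - 1 + (m + 1) = r - 2 + (m + 1) := by omega
      have e2 : 1 - 1 + (m + 1) = m + 1 := by omega
      rw [e1, e2, Nat.choose_self]
    · rintro s ⟨r1, r2, h1, h2, h3, h4, h5, rfl⟩
      have key : ∀ x y : ℕ, 1 ≤ x → x ≤ y → x + y = a →
          (x - 1 + (m + 1)).choose (m + 1) + (y - 1 + (m + 1)).choose (m + 1) ≤
            (r - 2 + (m + 1)).choose (m + 1) + 1 := by
        intro x y hx hxy hsum
        have hc := choose_chain m 0 (x - 1) (y - 1) (by omega)
        have e1 : 0 + (x - 1) = x - 1 := by omega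
        have e2 : y - 1 + (x - 1) = r - 2 := by omega
        rw [e1, e2] at hc
        have hz : (0 + (m + 1)).choose (m + 1) = 1 := by
          rw [Nat.zero_add, Nat.choose_self]
        omega
      rcases le_total r1 r2 with h | h
      · exact key r1 r2 h1 h h5
      · have := key r2 r1 h3 h (by omega)
        omega
  · intro hlt
    constructor
    · refine ⟨r, a - r, by omega, le_refl r, by omega, by omega, by omega, ?_⟩
      have e : a - r - 1 + (m + 1) = a - r - 1 + (m + 1) := rfl
      rfl
    · rintro s ⟨r1, r2, h1, h2, h3, h4, h5, rfl⟩
      have key : ∀ x y : ℕ, 1 ≤ x → x ≤ y → y ≤ r → x + y = a →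
          (x - 1 + (m + 1)).choose (m + 1) + (y - 1 + (m + 1)).choose (m + 1) ≤
            (r - 1 + (m + 1)).choose (m + 1) + (a - r - 1 + (m + 1)).choose (m + 1) := by
        intro x y hx hxy hyr hsum
        have hc := choose_chain m (a - r - 1) (r - y) (y - 1) (by omega)
        have e1 : a - r - 1 + (r - y) = x - 1 := by omega
        have e2 : y - 1 + (r - y) = r - 1 := by omega
        rw [e1, e2] at hc
        omega
      rcases le_total r1 r2 with h | h
      · exact key r1 r2 h1 h h4 h5
      · have := key r2 r1 h3 h h2 (by omega)
        omega
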